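/- Let X and Y be closed densely defined operators on Hilbert spaces which are diagonalizable, i.e. X = Σᵢ λᵢ Pᵢ and Y = Σⱼ μⱼ Qⱼ for families of mutually orthogonal projections {Pᵢ} and {Qⱼ} summing to the identity and scalars λᵢ, μⱼ. Then the spectrum of the tensor product operator X ⊗ Y equals the closure of the set {λμ : λ ∈ σ(X), μ ∈ σ(Y)}. -/
import Mathlib

open scoped Pointwise ENNReal

noncomputable section DiagAux

variable {ι : Type*} {H : Type*} [NormedAddCommGroup H] [InnerProductSpace ℂ H] [CompleteSpace H]

private lemma key_ineq (c : ι → ℂ) (C : ℝ) (hC : ∀ i, ‖c i‖ ≤ C) (x : ι → ℂ) (i : ι) :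
    ‖c i * x i‖ ^ (2:ℝ≥0∞).toReal ≤ C ^ (2:ℝ≥0∞).toReal * ‖x i‖ ^ (2:ℝ≥0∞).toReal := by
  rw [norm_mul, Real.mul_rpow (norm_nonneg _) (norm_nonneg _)]
  have h1 : ‖c i‖ ^ (2:ℝ≥0∞).toReal ≤ C ^ (2:ℝ≥0∞).toReal :=
    Real.rpow_le_rpow (norm_nonneg _) (hC i) ENNReal.toReal_nonneg
  exact mul_le_mul_of_nonneg_right h1 (Real.rpow_nonneg (norm_nonneg _) _)

lemma memℓp_diag (c : ι → ℂ) (C : ℝ) (hC : ∀ i, ‖c i‖ ≤ C)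
    (x : lp (fun _ : ι => ℂ) 2) : Memℓp (fun i => c i * x i) 2 := by
  apply memℓp_gen
  have hx : Summable (fun i => ‖x i‖ ^ (2 : ℝ≥0∞).toReal) :=
    (lp.memℓp x).summable (by norm_num)
  exact Summable.of_nonneg_of_le (fun i => Real.rpow_nonneg (norm_nonneg _) _)
    (key_ineq c C hC x) (hx.mul_left _)

def diagMul (c : ι → ℂ) (C : ℝ) (hC0 : 0 ≤ C) (hC : ∀ i, ‖c i‖ ≤ C) :
    lp (fun _ : ι => ℂ) 2 →L[ℂ] lp (fun _ : ι => ℂ) 2 :=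
  LinearMap.mkContinuous
    { toFun := fun x => ⟨fun i => c i * x i, memℓp_diag c C hC x⟩
      map_add' := fun x y => lp.ext <| funext fun i => by
        simp only [lp.coeFn_add, Pi.add_apply]
        exact mul_add _ _ _
      map_smul' := fun a x => lp.ext <| funext fun i => by
        simp only [lp.coeFn_smul, Pi.smul_apply, RingHom.id_apply, smul_eq_mul]
        ring }
    C
    (by
      intro x
      set y : lp (fun _ : ι => ℂ) 2 := ⟨fun i => c i * x i, memℓp_diag c C hC x⟩
      have hp : (0:ℝ) < (2 : ℝ≥0∞).toReal := by norm_num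
      have hy := lp.norm_rpow_eq_tsum hp y
      have hx := lp.norm_rpow_eq_tsum hp x
      have hsum : (∑' i, ‖y i‖ ^ (2:ℝ≥0∞).toReal)
          ≤ C ^ (2:ℝ≥0∞).toReal * ∑' i, ‖x i‖ ^ (2:ℝ≥0∞).toReal := by
        rw [← tsum_mul_left]
        exact Summable.tsum_le_tsum (fun i => key_ineq c C hC x i) ((lp.memℓp y).summable hp)
          (((lp.memℓp x).summable hp).mul_left _)
      have hfinal : ‖y‖ ^ (2:ℝ≥0∞).toReal ≤ (C * ‖x‖) ^ (2:ℝ≥0∞).toReal := by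
        rw [hy, Real.mul_rpow hC0 (norm_nonneg _), ← hx] at *
        exact hsum
      exact (Real.rpow_le_rpow_iff (norm_nonneg _)
        (mul_nonneg hC0 (norm_nonneg _)) hp).mp hfinal)

lemma diagMul_apply (c : ι → ℂ) (C : ℝ) (hC0 : 0 ≤ C) (hC : ∀ i, ‖c i‖ ≤ C)
    (x : lp (fun _ : ι => ℂ) 2) (i : ι) :
    diagMul c C hC0 hC x i = c i * x i := rfl

def diagOpH (e : HilbertBasis ι ℂ H) (c : ι → ℂ) (C : ℝ) (hC0 : 0 ≤ C)
    (hC : ∀ i, ‖c i‖ ≤ C) : H →L[ℂ] H :=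
  (e.repr.symm.toLinearIsometry.toContinuousLinearMap).comp
    ((diagMul c C hC0 hC).comp e.repr.toLinearIsometry.toContinuousLinearMap)

lemma diagOpH_apply_basis (e : HilbertBasis ι ℂ H) (c : ι → ℂ) (C : ℝ) (hC0 : 0 ≤ C)
    (hC : ∀ i, ‖c i‖ ≤ C) (i : ι) : diagOpH e c C hC0 hC (e i) = c i • e i := by
  classical
  have h1 : diagOpH e c C hC0 hC (e i) = e.repr.symm (diagMul c C hC0 hC (e.repr (e i))) := rfl
  rw [h1, e.repr_self]
  have h2 : diagMul c C hC0 hC (lp.single 2 i (1:ℂ)) = c i • lp.single 2 i (1:ℂ) := by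
    apply lp.ext
    funext j
    rw [diagMul_apply]
    by_cases hji : j = i
    · subst hji
      simp [lp.single_apply_self]
    · simp [lp.single_apply_ne 2 i _ hji, hji]
  rw [h2, map_smul, e.repr_symm_single]

theorem spectrum_diag (e : HilbertBasis ι ℂ H) (lam : ι → ℂ) (X : H →L[ℂ] H)
    (hX : ∀ i, X (e i) = lam i • e i) : spectrum ℂ X = closure (Set.range lam) := by
  apply Set.Subset.antisymm
  · intro z hz
    by_contra hzc
    rw [Metric.mem_closure_iff] at hzc
    push_neg at hzc
    obtain ⟨ε, hε, hbd⟩ := hzc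
    have hbd' : ∀ i, ε ≤ ‖z - lam i‖ := fun i => by
      simpa [dist_eq_norm] using hbd (lam i) (Set.mem_range_self i)
    set c : ι → ℂ := fun i => (z - lam i)⁻¹ with hc
    have hne : ∀ i, z - lam i ≠ 0 := fun i => by
      intro h0
      have := hbd' i
      rw [h0, norm_zero] at this
      linarith
    have hCb : ∀ i, ‖c i‖ ≤ ε⁻¹ := fun i => by
      rw [hc]
      simp only [norm_inv]
      exact inv_anti₀ hε (hbd' i)
    set B := diagOpH e c ε⁻¹ (le_of_lt (inv_pos.mpr hε)) hCb with hB
    set A := algebraMap ℂ (H →L[ℂ] H) z - X with hA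
    have hAe : ∀ i, A (e i) = (z - lam i) • e i := fun i => by
      rw [hA]
      simp only [ContinuousLinearMap.sub_apply, hX i, Algebra.algebraMap_eq_smul_one,
        ContinuousLinearMap.smul_apply, ContinuousLinearMap.one_apply, sub_smul]
    have hdense : Dense (Submodule.span ℂ (Set.range (⇑e)) : Set H) :=
      Submodule.dense_iff_topologicalClosure_eq_top.mpr e.dense_span
    have hAB : A * B = 1 := by
      refine ContinuousLinearMap.ext_on hdense ?_
      rintro _ ⟨i, rfl⟩
      rw [ContinuousLinearMap.mul_apply, diagOpH_apply_basis, map_smul, hAe i,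
        smul_smul, inv_mul_cancel₀ (hne i), one_smul, ContinuousLinearMap.one_apply]
    have hBA : B * A = 1 := by
      refine ContinuousLinearMap.ext_on hdense ?_
      rintro _ ⟨i, rfl⟩
      rw [ContinuousLinearMap.mul_apply, hAe i, map_smul, diagOpH_apply_basis,
        smul_smul, mul_inv_cancel₀ (hne i), one_smul, ContinuousLinearMap.one_apply]
    have : IsUnit A := ⟨⟨A, B, hAB, hBA⟩, rfl⟩
    rw [spectrum.mem_iff] at hz
    exact hz this
  · refine closure_minimal ?_ (spectrum.isClosed X)
    rintro _ ⟨i, rfl⟩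
    rw [spectrum.mem_iff]
    intro hu
    have h0 : (algebraMap ℂ (H →L[ℂ] H) (lam i) - X) (e i) = 0 := by
      simp [Algebra.algebraMap_eq_smul_one, hX i]
    obtain ⟨u, hu⟩ := hu
    have : e i = 0 := by
      have h1 : ((↑u⁻¹ : H →L[ℂ] H) * (u : H →L[ℂ] H)) (e i) = e i := by
        rw [u.inv_mul]; rfl
      rw [hu, ContinuousLinearMap.mul_apply, h0, map_zero] at h1
      exact h1.symm
    have hnorm := e.orthonormal.1 i
    rw [this, norm_zero] at hnorm
    norm_num at hnorm

end DiagAux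

/-- If `X`, `Y`, and `Z` are (bounded) diagonalizable operators, diagonalized by Hilbert
bases `e : ι → H`, `f : κ → K` and `g : ι × κ → L` with eigenvalues `λ i`, `μ j`, and
`λ i * μ j` respectively (so that `Z` is a model for the tensor product operator `X ⊗ Y`
on the Hilbert space tensor product `L = H ⊗ K`), then the spectrum of `X ⊗ Y` equals the
closure of `σ(X)·σ(Y)`. -/
theorem stmt2 {H K L : Type*}
    [NormedAddCommGroup H] [InnerProductSpace ℂ H] [CompleteSpace H]
    [NormedAddCommGroup K] [InnerProductSpace ℂ K] [CompleteSpace K]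
    [NormedAddCommGroup L] [InnerProductSpace ℂ L] [CompleteSpace L]
    {ι κ : Type*} (e : HilbertBasis ι ℂ H) (f : HilbertBasis κ ℂ K)
    (g : HilbertBasis (ι × κ) ℂ L)
    (lam : ι → ℂ) (mu : κ → ℂ)
    (X : H →L[ℂ] H) (Y : K →L[ℂ] K) (Z : L →L[ℂ] L)
    (hX : ∀ i, X (e i) = lam i • e i) (hY : ∀ j, Y (f j) = mu j • f j)
    (hZ : ∀ p : ι × κ, Z (g p) = (lam p.1 * mu p.2) • g p) :
    spectrum ℂ Z = closure (spectrum ℂ X * spectrum ℂ Y) := by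
  rw [spectrum_diag e lam X hX, spectrum_diag f mu Y hY,
    spectrum_diag g (fun p => lam p.1 * mu p.2) Z hZ]
  have hr : Set.range (fun p : ι × κ => lam p.1 * mu p.2) = Set.range lam * Set.range mu := by
    ext z
    constructor
    · rintro ⟨p, rfl⟩
      exact Set.mul_mem_mul (Set.mem_range_self p.1) (Set.mem_range_self p.2)
    · rintro ⟨a, ⟨i, rfl⟩, b, ⟨j, rfl⟩, rfl⟩
      exact ⟨(i, j), rfl⟩
  rw [hr]
  apply Set.Subset.antisymm
  · exact closure_mono (Set.mul_subset_mul subset_closure subset_closure)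
  · refine closure_minimal ?_ isClosed_closure
    rintro _ ⟨a, ha, b, hb, rfl⟩
    exact map_mem_closure₂ continuous_mul ha hb fun x hx y hy => Set.mul_mem_mul hx hy
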